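/- arXiv:1605.00081 — 2 statements merged into one kernel-verified Lean document; each statement's English description precedes it below -/
import Mathlib

section
/- Let ⊗ be a continuous t-norm on [0,1], X a partially ordered compact space, and Φ : CX → [0,1] a map satisfying (Mon), (Act), (Sup) and (Ten)lax. Then: (1) if Φ also satisfies (Top), i.e. Φ(1) = 1, then Zero(Φ) ≠ ∅; (2) if Φ also satisfies (Ten), i.e. Φ(ψ₁⊗ψ₂) = Φ(ψ₁)⊗Φ(ψ₂) for all ψ₁, ψ₂ ∈ CX, then Zero(Φ) is irreducible. -/
open unitInterval Set

/-- A continuous t-norm on the unit interval `[0,1]`. -/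
structure ContinuousTNorm where
  mul : I → I → I
  comm : ∀ x y, mul x y = mul y x
  assoc : ∀ x y z, mul (mul x y) z = mul x (mul y z)
  mono : ∀ ⦃x₁ x₂ y₁ y₂ : I⦄, x₁ ≤ x₂ → y₁ ≤ y₂ → mul x₁ y₁ ≤ mul x₂ y₂
  continuous : Continuous fun p : I × I => mul p.1 p.2
  one_mul' : ∀ x, mul 1 x = x

/-- The `n`-fold `⊗`-power `xⁿ`. -/
def ContinuousTNorm.pow (T : ContinuousTNorm) (x : I) : ℕ → I
  | 0 => 1
  | n + 1 => T.mul x (T.pow x n)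


/-- A continuous antitone (monotone of type `X → [0,1]ᵒᵖ`) map. -/
structure CMap (X : Type*) [TopologicalSpace X] [Preorder X] where
  toFun : X → I
  continuous' : Continuous toFun
  antitone' : Antitone toFun

namespace CMap

variable {X : Type*} [TopologicalSpace X] [Preorder X]

/-- The constant map `1`. -/
def one : CMap X := ⟨fun _ => 1, continuous_const, fun _ _ _ => le_rfl⟩

/-- Pointwise tensor `ψ₁ ⊗ ψ₂`. -/
def tens (T : ContinuousTNorm) (ψ₁ ψ₂ : CMap X) : CMap X where
  toFun x := T.mul (ψ₁.toFun x) (ψ₂.toFun x)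
  continuous' := T.continuous.comp (ψ₁.continuous'.prodMk ψ₂.continuous')
  antitone' := fun _ _ h => T.mono (ψ₁.antitone' h) (ψ₂.antitone' h)

/-- Pointwise action `u ⊗ ψ` of a scalar `u ∈ [0,1]`. -/
def smul (T : ContinuousTNorm) (u : I) (ψ : CMap X) : CMap X where
  toFun x := T.mul u (ψ.toFun x)
  continuous' := T.continuous.comp (continuous_const.prodMk ψ.continuous')
  antitone' := fun _ _ h => T.mono le_rfl (ψ.antitone' h)

/-- Pointwise binary supremum `ψ₁ ∨ ψ₂`. -/
noncomputable def sup (ψ₁ ψ₂ : CMap X) : CMap X where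
  toFun x := max (ψ₁.toFun x) (ψ₂.toFun x)
  continuous' := ψ₁.continuous'.max ψ₂.continuous'
  antitone' := fun _ _ h => max_le_max (ψ₁.antitone' h) (ψ₂.antitone' h)

/-- Truncated subtraction in `[0,1]`. -/
noncomputable def tsubI (a u : I) : I :=
  ⟨max ((a : ℝ) - u) 0, ⟨le_max_right _ _,
    max_le (by linarith [a.2.2, u.2.1]) zero_le_one⟩⟩

/-- Pointwise truncated subtraction `ψ ⊖ u`. -/
noncomputable def tsub (ψ : CMap X) (u : I) : CMap X where
  toFun x := tsubI (ψ.toFun x) u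
  continuous' := by
    apply Continuous.subtype_mk
    exact ((continuous_subtype_val.comp ψ.continuous').sub continuous_const).max continuous_const
  antitone' := fun a b h =>
    Subtype.mk_le_mk.mpr
      (max_le_max (sub_le_sub_right (Subtype.coe_le_coe.2 (ψ.antitone' h)) _) le_rfl)

end CMap


section Conditions

variable {X : Type*} [TopologicalSpace X] [Preorder X]

/-- `(Mon)`: `Φ` is monotone. -/
def Mon (Φ : CMap X → I) : Prop :=
  ∀ ψ₁ ψ₂ : CMap X, (∀ x, ψ₁.toFun x ≤ ψ₂.toFun x) → Φ ψ₁ ≤ Φ ψ₂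

/-- `(Act)`: `Φ(u ⊗ ψ) = u ⊗ Φ(ψ)`. -/
def Act (T : ContinuousTNorm) (Φ : CMap X → I) : Prop :=
  ∀ (u : I) (ψ : CMap X), Φ (CMap.smul T u ψ) = T.mul u (Φ ψ)

/-- `(Sup)`: `Φ(ψ₁ ∨ ψ₂) = Φ(ψ₁) ∨ Φ(ψ₂)`. -/
def SupC (Φ : CMap X → I) : Prop :=
  ∀ ψ₁ ψ₂ : CMap X, Φ (ψ₁.sup ψ₂) = max (Φ ψ₁) (Φ ψ₂)

/-- `(Ten)lax`: `Φ(ψ₁ ⊗ ψ₂) ≤ Φ(ψ₁) ⊗ Φ(ψ₂)`. -/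
def TenLax (T : ContinuousTNorm) (Φ : CMap X → I) : Prop :=
  ∀ ψ₁ ψ₂ : CMap X, Φ (CMap.tens T ψ₁ ψ₂) ≤ T.mul (Φ ψ₁) (Φ ψ₂)

/-- `(Ten)`: `Φ(ψ₁ ⊗ ψ₂) = Φ(ψ₁) ⊗ Φ(ψ₂)`. -/
def TenC (T : ContinuousTNorm) (Φ : CMap X → I) : Prop :=
  ∀ ψ₁ ψ₂ : CMap X, Φ (CMap.tens T ψ₁ ψ₂) = T.mul (Φ ψ₁) (Φ ψ₂)

/-- `(Top)`: `Φ(1) = 1`. -/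
def TopC (Φ : CMap X → I) : Prop := Φ CMap.one = 1

/-- `(Min)`: `Φ(ψ ⊖ u) = Φ(ψ) ⊖ u`. -/
noncomputable def MinC (Φ : CMap X → I) : Prop :=
  ∀ (u : I) (ψ : CMap X), Φ (ψ.tsub u) = CMap.tsubI (Φ ψ) u

/-- Condition `(A)`. -/
def CondA (Φ : CMap X → I) : Prop :=
  ∀ (x : X) (ψ : CMap X), Φ ψ = 0 → 0 < ψ.toFun x →
    ∃ ψ' : CMap X, ψ'.toFun x = 1 ∧ Φ ψ' = 0

/-- `Zero(Φ) = ⋂ {Zero ψ | Φ ψ = 0}`. -/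
def ZeroPhi (Φ : CMap X → I) : Set X := {x | ∀ ψ : CMap X, Φ ψ = 0 → ψ.toFun x = 0}

/-- `Anti(Φ)`. -/
def AntiPhi (Φ : CMap X → I) : Set X := {x | ∀ ψ : CMap X, ψ.toFun x ≤ Φ ψ}

/-- `Φ_A(ψ) = sup_{x ∈ A} ψ(x)`, with `Φ_∅ = 0`. -/
noncomputable def PhiA (A : Set X) (ψ : CMap X) : I :=
  ⟨sSup ((fun x => (ψ.toFun x : ℝ)) '' A),
   ⟨Real.sSup_nonneg (by rintro r ⟨x, _, rfl⟩; exact (ψ.toFun x).2.1),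
    Real.sSup_le (by rintro r ⟨x, _, rfl⟩; exact (ψ.toFun x).2.2) zero_le_one⟩⟩

end Conditions


section AuxTNorm

open Filter Topology

namespace ContinuousTNorm

variable (T : ContinuousTNorm)

lemma mul_one' (x : I) : T.mul x 1 = x := by rw [T.comm]; exact T.one_mul' x

lemma mul_le_left (x y : I) : T.mul x y ≤ x := by
  have := T.mono (le_refl x) (unitInterval.le_one' : y ≤ 1)
  rwa [T.mul_one'] at this

lemma mul_le_right (x y : I) : T.mul x y ≤ y := by
  rw [T.comm]; exact T.mul_le_left y x

lemma mul_zero' (x : I) : T.mul x 0 = 0 :=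
  le_antisymm (T.mul_le_right x 0) unitInterval.nonneg'

lemma zero_mul' (x : I) : T.mul 0 x = 0 := by rw [T.comm]; exact T.mul_zero' x

lemma pow_succ' (x : I) (n : ℕ) : T.pow x (n+1) = T.mul x (T.pow x n) := rfl

lemma pow_one' (x : I) : T.pow x 1 = x := by
  rw [T.pow_succ']; exact T.mul_one' x

lemma pow_add' (x : I) (m n : ℕ) : T.pow x (m + n) = T.mul (T.pow x m) (T.pow x n) := by
  induction m with
  | zero => simp [ContinuousTNorm.pow, T.one_mul']
  | succ m ih =>
      have : m + 1 + n = (m + n) + 1 := by omega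
      rw [this, T.pow_succ', ih, T.pow_succ', T.assoc]

lemma pow_antitone (x : I) : Antitone (fun n => T.pow x n) := by
  apply antitone_nat_of_succ_le
  intro n
  rw [T.pow_succ']
  exact T.mul_le_right x _

/-- divisibility -/
lemma exists_mul_eq (a t : I) (h : t ≤ a) : ∃ s : I, T.mul a s = t := by
  set proj : ℝ → I := fun r => ⟨min 1 (max 0 r), ⟨le_min zero_le_one (le_max_left 0 r), min_le_left _ _⟩⟩ with hproj
  have hprojc : Continuous proj := by
    apply Continuous.subtype_mk
    exact continuous_const.min (continuous_const.max continuous_id)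
  set f : ℝ → ℝ := fun r => ((T.mul a (proj r) : I) : ℝ) with hf
  have hfc : Continuous f := by
    apply Continuous.subtype_val
    exact T.continuous.comp (continuous_const.prodMk hprojc)
  have h0 : f 0 = 0 := by
    have : proj 0 = 0 := by
      apply Subtype.ext; simp [hproj]
    simp [hf, this, T.mul_zero']
  have h1 : f 1 = (a : ℝ) := by
    have : proj 1 = 1 := by
      apply Subtype.ext; simp [hproj]
    simp [hf, this, T.mul_one']
  have hmem : (t : ℝ) ∈ Icc (f 0) (f 1) := by
    rw [h0, h1]; exact ⟨t.2.1, h⟩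
  obtain ⟨r, _, hr⟩ := intermediate_value_Icc (zero_le_one (α := ℝ)) hfc.continuousOn hmem
  exact ⟨proj r, Subtype.ext hr⟩

/-- The key fixed-point lemma: if `d ⊗ v = 0` with `d > 0` and `c ⊗ v = c`, then `c = 0`. -/
lemma eq_zero_of_mul_fix {d v c : I} (hdv : T.mul d v = 0) (hd : 0 < d) (hc : T.mul c v = c) :
    c = 0 := by
  set r : ℕ → ℝ := fun n => ((T.pow v n : I) : ℝ) with hr
  have hran : Antitone r := fun m n h => Subtype.coe_le_coe.2 (T.pow_antitone v h)
  have hbdd : BddBelow (Set.range r) := ⟨0, by rintro x ⟨n, rfl⟩; exact (T.pow v n).2.1⟩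
  set L : ℝ := ⨅ n, r n with hL
  have hLt : Tendsto r atTop (𝓝 L) := tendsto_atTop_ciInf hran hbdd
  have hL0 : 0 ≤ L := le_ciInf (fun n => (T.pow v n).2.1)
  have hL1 : L ≤ 1 := le_trans (ciInf_le hbdd 0) (T.pow v 0).2.2
  set e : I := ⟨L, hL0, hL1⟩ with he
  have hte : Tendsto (fun n => T.pow v n) atTop (𝓝 e) := tendsto_subtype_rng.2 hLt
  -- e is idempotent
  have h2n : Tendsto (fun n => T.pow v (2*n)) atTop (𝓝 e) := by
    apply hte.comp
    exact Filter.tendsto_atTop_atTop_of_monotone (fun a b h => by omega) (fun b => ⟨b, by omega⟩)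
  have h2n' : Tendsto (fun n => T.mul (T.pow v n) (T.pow v n)) atTop (𝓝 (T.mul e e)) :=
    (T.continuous.tendsto (e, e)).comp (hte.prodMk_nhds hte)
  have hee : T.mul e e = e := by
    refine tendsto_nhds_unique ?_ h2n
    convert h2n' using 2 with n
    rw [two_mul, T.pow_add']
  -- c ⊗ e = c
  have hcpow : ∀ n, T.mul c (T.pow v n) = c := by
    intro n
    induction n with
    | zero => exact T.mul_one' c
    | succ n ih => rw [T.pow_succ', T.comm v, ← T.assoc, ih, hc]
  have hce : T.mul c e = c := by
    have hmc : Tendsto (fun n => T.mul c (T.pow v n)) atTop (𝓝 (T.mul c e)) :=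
      (T.continuous.tendsto (c, e)).comp (tendsto_const_nhds.prodMk_nhds hte)
    exact tendsto_nhds_unique (by simpa [hcpow] using hmc : Tendsto (fun _ : ℕ => c) atTop (𝓝 (T.mul c e))) tendsto_const_nhds
  -- d ⊗ e = 0
  have hev : e ≤ v := by
    have : L ≤ r 1 := ciInf_le hbdd 1
    rw [hr] at this
    simp only [T.pow_one'] at this
    exact this
  have hde : T.mul d e = 0 :=
    le_antisymm (le_trans (T.mono (le_refl d) hev) (le_of_eq hdv)) unitInterval.nonneg'
  -- if e = 0 then done, else contradiction
  rcases eq_or_lt_of_le (unitInterval.nonneg' : (0:I) ≤ e) with h0e | h0e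
  · rw [← hce, ← h0e, T.mul_zero']
  · exfalso
    set t : I := min d e with ht
    have htpos : 0 < t := lt_min hd h0e
    obtain ⟨s, hs⟩ := T.exists_mul_eq e t (min_le_right d e)
    have hte' : T.mul t e = t := by
      rw [← hs, T.assoc, T.comm s e, ← T.assoc, hee, hs]
    have : T.mul t e ≤ 0 := by
      rw [← hde]; exact T.mono (min_le_left d e) (le_refl e)
    rw [hte'] at this
    exact absurd (le_antisymm this unitInterval.nonneg') (ne_of_gt htpos)

end ContinuousTNorm

end AuxTNorm
section AuxCMap

open Filter Topology

variable {X : Type*} [TopologicalSpace X] [Preorder X]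

lemma CMap.ext' {ψ₁ ψ₂ : CMap X} (h : ψ₁.toFun = ψ₂.toFun) : ψ₁ = ψ₂ := by
  cases ψ₁; cases ψ₂; simpa using h

lemma Ipos {a : I} (h : a ≠ 0) : 0 < (a : ℝ) :=
  lt_of_le_of_ne a.2.1 (fun h' => h (Subtype.ext h'.symm))

lemma exists_null_sup (T : ContinuousTNorm) (Φ : CMap X → I) (hAct : Act T Φ) (hSup : SupC Φ)
    {ι : Type*} (F : ι → CMap X) (h0 : ∀ i, Φ (F i) = 0) (t : Finset ι) :
    ∃ φ : CMap X, Φ φ = 0 ∧ ∀ i ∈ t, ∀ y, (F i).toFun y ≤ φ.toFun y := by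
  induction t using Finset.cons_induction with
  | empty =>
      refine ⟨CMap.smul T 0 CMap.one, ?_, by simp⟩
      rw [hAct]; exact T.zero_mul' _
  | cons i s hi ih =>
      obtain ⟨φ, hφ0, hφ⟩ := ih
      refine ⟨(F i).sup φ, ?_, ?_⟩
      · rw [hSup, hφ0, h0 i]; simp
      · intro j hj y
        rcases Finset.mem_cons.1 hj with rfl | hj
        · exact le_max_left _ _
        · exact le_trans (hφ j hj y) (le_max_right _ _)

end AuxCMap

section Part1

open Filter Topology

lemma part1 (T : ContinuousTNorm) {X : Type*} [TopologicalSpace X] [CompactSpace X]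
    [PartialOrder X] (Φ : CMap X → I) (hMon : Mon Φ) (hAct : Act T Φ) (hSup : SupC Φ)
    (hTop : TopC Φ) : (ZeroPhi Φ).Nonempty := by
  have hXne : Nonempty X := by
    by_contra h
    have hone : (CMap.one : CMap X) = CMap.smul T 0 CMap.one := by
      apply CMap.ext'; funext x; exact absurd ⟨x⟩ h
    have h1 : (1 : I) = 0 := by
      rw [← hTop, hone, hAct, T.zero_mul']
    have := congrArg Subtype.val h1
    norm_num at this
  by_contra hne
  rw [Set.not_nonempty_iff_eq_empty] at hne
  have hall : ∀ x : X, ∃ ψ : CMap X, Φ ψ = 0 ∧ ψ.toFun x ≠ 0 := by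
    intro x
    have hx : x ∉ ZeroPhi Φ := by rw [hne]; exact Set.notMem_empty x
    simp only [ZeroPhi, Set.mem_setOf_eq, not_forall] at hx
    obtain ⟨ψ, hψ⟩ := hx
    exact ⟨ψ, by tauto⟩
  choose F hF0 hFx using hall
  set U : X → Set X := fun x => {y | 0 < ((F x).toFun y : ℝ)} with hU
  have hUopen : ∀ x, IsOpen (U x) :=
    fun x => isOpen_lt continuous_const (continuous_subtype_val.comp (F x).continuous')
  have hcover : (Set.univ : Set X) ⊆ ⋃ x, U x := by
    intro y _
    exact Set.mem_iUnion.2 ⟨y, Ipos (hFx y)⟩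
  obtain ⟨t, ht⟩ := isCompact_univ.elim_finite_subcover U hUopen hcover
  obtain ⟨φ, hφ0, hφ⟩ := exists_null_sup T Φ hAct hSup F hF0 t
  have hφpos : ∀ y, 0 < (φ.toFun y : ℝ) := by
    intro y
    obtain ⟨x, hxt, hxy⟩ := by
      have := ht (Set.mem_univ y)
      simpa using this
    exact lt_of_lt_of_le hxy (Subtype.coe_le_coe.2 (hφ x hxt y))
  obtain ⟨x₀, -, hmin⟩ := isCompact_univ.exists_isMinOn Set.univ_nonempty
    ((continuous_subtype_val.comp φ.continuous')).continuousOn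
  set ε : I := φ.toFun x₀ with hε
  have hεpos : 0 < (ε : ℝ) := hφpos x₀
  have hle : ∀ y, (CMap.smul T ε CMap.one).toFun y ≤ φ.toFun y := by
    intro y
    show T.mul ε 1 ≤ φ.toFun y
    rw [T.mul_one']
    exact Subtype.coe_le_coe.1 (hmin (Set.mem_univ y))
  have h2 : Φ (CMap.smul T ε CMap.one) ≤ 0 := by
    rw [← hφ0]; exact hMon _ _ hle
  rw [hAct, hTop, T.mul_one'] at h2
  have hz : ε = 0 := le_antisymm h2 unitInterval.nonneg'
  rw [hz] at hεpos
  norm_num at hεpos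

end Part1
set_option linter.unusedSectionVars false
section NachbinBasics

open Filter Topology

variable {X : Type*} [TopologicalSpace X] [CompactSpace X] [PartialOrder X]

/-- upward closure -/
def upCl (S : Set X) : Set X := {a | ∃ s ∈ S, s ≤ a}
/-- downward closure -/
def dnCl (S : Set X) : Set X := {a | ∃ s ∈ S, a ≤ s}

lemma subset_upCl (S : Set X) : S ⊆ upCl S := fun x hx => ⟨x, hx, le_refl x⟩

lemma isUpperSet_upCl (S : Set X) : IsUpperSet (upCl S) :=
  fun _ _ hab ⟨s, hs, hsa⟩ => ⟨s, hs, le_trans hsa hab⟩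

lemma isLowerSet_dnCl (S : Set X) : IsLowerSet (dnCl S) :=
  fun _ _ hab ⟨s, hs, hsa⟩ => ⟨s, hs, le_trans hab hsa⟩

variable (hle : IsClosed {p : X × X | p.1 ≤ p.2})
include hle

lemma t2_of_closed_le : T2Space X := by
  rw [t2_iff_isClosed_diagonal]
  have h2 : IsClosed {p : X × X | p.2 ≤ p.1} := by
    have : {p : X × X | p.2 ≤ p.1} = Prod.swap ⁻¹' {p : X × X | p.1 ≤ p.2} := rfl
    rw [this]
    exact hle.preimage continuous_swap
  have : Set.diagonal X = {p : X × X | p.1 ≤ p.2} ∩ {p : X × X | p.2 ≤ p.1} := by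
    ext ⟨x, y⟩
    simp only [Set.mem_diagonal_iff, Set.mem_inter_iff, Set.mem_setOf_eq]
    constructor
    · rintro rfl; exact ⟨le_refl _, le_refl _⟩
    · rintro ⟨h1, h2⟩; exact le_antisymm h1 h2
  rw [this]
  exact hle.inter h2

lemma isClosed_upCl_of_isClosed {S : Set X} (hS : IsClosed S) : IsClosed (upCl S) := by
  haveI := t2_of_closed_le hle
  have : upCl S = Prod.snd '' ({p : X × X | p.1 ≤ p.2} ∩ (S ×ˢ Set.univ)) := by
    ext a
    constructor
    · rintro ⟨s, hs, hsa⟩; exact ⟨(s, a), ⟨hsa, hs, Set.mem_univ _⟩, rfl⟩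
    · rintro ⟨⟨s, a'⟩, ⟨h1, h2, -⟩, rfl⟩; exact ⟨s, h2, h1⟩
  rw [this]
  exact (((hle.inter (hS.prod isClosed_univ)).isCompact).image continuous_snd).isClosed

lemma isClosed_dnCl_of_isClosed {S : Set X} (hS : IsClosed S) : IsClosed (dnCl S) := by
  haveI := t2_of_closed_le hle
  have : dnCl S = Prod.fst '' ({p : X × X | p.1 ≤ p.2} ∩ (Set.univ ×ˢ S)) := by
    ext a
    constructor
    · rintro ⟨s, hs, hsa⟩; exact ⟨(a, s), ⟨hsa, Set.mem_univ _, hs⟩, rfl⟩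
    · rintro ⟨⟨a', s⟩, ⟨h1, -, h2⟩, rfl⟩; exact ⟨s, h2, h1⟩
  rw [this]
  exact (((hle.inter (isClosed_univ.prod hS)).isCompact).image continuous_fst).isClosed

/-- Nachbin separation of a closed upper set from a closed lower set. -/
lemma nachbin_sep {A B : Set X} (hA : IsClosed A) (hAu : IsUpperSet A)
    (hB : IsClosed B) (hBl : IsLowerSet B) (hAB : Disjoint A B) :
    ∃ U V : Set X, IsOpen U ∧ IsUpperSet U ∧ A ⊆ U ∧ IsOpen V ∧ IsLowerSet V ∧ B ⊆ V ∧
      Disjoint U V := by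
  haveI := t2_of_closed_le hle
  obtain ⟨U₀, V₀, hU₀o, hV₀o, hAU₀, hBV₀, hUV₀⟩ := NormalSpace.normal A B hA hB hAB
  refine ⟨(dnCl U₀ᶜ)ᶜ, (upCl V₀ᶜ)ᶜ, ?_, ?_, ?_, ?_, ?_, ?_, ?_⟩
  · exact (isClosed_dnCl_of_isClosed hle hU₀o.isClosed_compl).isOpen_compl
  · exact (isLowerSet_dnCl _).compl
  · intro a ha
    rintro ⟨w, hw, haw⟩
    exact hw (hAU₀ (hAu haw ha))
  · exact (isClosed_upCl_of_isClosed hle hV₀o.isClosed_compl).isOpen_compl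
  · exact (isUpperSet_upCl _).compl
  · intro b hb
    rintro ⟨w, hw, hwb⟩
    exact hw (hBV₀ (hBl hwb hb))
  · rw [Set.disjoint_left]
    intro z hz1 hz2
    have hzU : z ∈ U₀ := by
      by_contra h
      exact hz1 ⟨z, h, le_refl z⟩
    have hzV : z ∈ V₀ := by
      by_contra h
      exact hz2 ⟨z, h, le_refl z⟩
    exact Set.disjoint_left.mp hUV₀ hzU hzV

/-- Interpolation: between a closed upper set and an open upper set containing it, one can
insert an open upper set whose up-closed closure stays inside. -/
lemma nachbin_interp {C W : Set X} (hC : IsClosed C) (hCu : IsUpperSet C)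
    (hW : IsOpen W) (hWu : IsUpperSet W) (hCW : C ⊆ W) :
    ∃ V : Set X, IsOpen V ∧ IsUpperSet V ∧ C ⊆ V ∧ upCl (closure V) ⊆ W := by
  have hBc : IsClosed (dnCl Wᶜ) := isClosed_dnCl_of_isClosed hle hW.isClosed_compl
  have hdisj : Disjoint C (dnCl Wᶜ) := by
    rw [Set.disjoint_left]
    rintro x hx ⟨w, hw, hxw⟩
    exact hw (hCW (hCu hxw hx))
  obtain ⟨U, V', hUo, hUu, hCU, hV'o, hV'l, hBV', hUV'⟩ :=
    nachbin_sep hle hC hCu hBc (isLowerSet_dnCl _) hdisj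
  refine ⟨U, hUo, hUu, hCU, ?_⟩
  have h1 : closure U ⊆ V'ᶜ :=
    closure_minimal (fun u hu hv => Set.disjoint_left.mp hUV' hu hv) hV'o.isClosed_compl
  rintro a ⟨s, hs, hsa⟩
  have haV : a ∉ V' := fun ha => (h1 hs) (hV'l hsa ha)
  by_contra haW
  exact haV (hBV' ⟨a, haW, le_refl a⟩)

end NachbinBasics
section NachbinChain

open Filter Topology

variable {X : Type*} [TopologicalSpace X] [CompactSpace X] [PartialOrder X]

open Classical in
noncomputable def pickV (hle : IsClosed {p : X × X | p.1 ≤ p.2}) (C W : Set X) : Set X :=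
  if h : IsClosed C ∧ IsUpperSet C ∧ IsOpen W ∧ IsUpperSet W ∧ C ⊆ W then
    (nachbin_interp hle h.1 h.2.1 h.2.2.1 h.2.2.2.1 h.2.2.2.2).choose
  else ∅

lemma pickV_spec (hle : IsClosed {p : X × X | p.1 ≤ p.2}) {C W : Set X}
    (h1 : IsClosed C) (h2 : IsUpperSet C) (h3 : IsOpen W) (h4 : IsUpperSet W) (h5 : C ⊆ W) :
    IsOpen (pickV hle C W) ∧ IsUpperSet (pickV hle C W) ∧ C ⊆ pickV hle C W ∧
      upCl (closure (pickV hle C W)) ⊆ W := by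
  have h : IsClosed C ∧ IsUpperSet C ∧ IsOpen W ∧ IsUpperSet W ∧ C ⊆ W := ⟨h1, h2, h3, h4, h5⟩
  classical
  rw [pickV, dif_pos h]
  exact (nachbin_interp hle h.1 h.2.1 h.2.2.1 h.2.2.2.1 h.2.2.2.2).choose_spec

/-- the dyadic chain of open upper sets -/
noncomputable def chainFun (hle : IsClosed {p : X × X | p.1 ≤ p.2}) (A Btop : Set X) :
    ℕ → ℕ → Set X
  | 0 => fun k => if k = 0 then ∅ else Btop
  | (n+1) => fun k =>
      if k % 2 = 0 then chainFun hle A Btop n (k / 2)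
      else pickV hle (if k / 2 = 0 then A else upCl (closure (chainFun hle A Btop n (k / 2))))
                 (chainFun hle A Btop n (k / 2 + 1))

/-- the invariant -/
def GoodChain (A : Set X) (n : ℕ) (f : ℕ → Set X) : Prop :=
  (∀ k, 1 ≤ k → k ≤ 2^n → (IsOpen (f k) ∧ IsUpperSet (f k) ∧ A ⊆ f k)) ∧
  (∀ k, k < 2^n → (if k = 0 then A else upCl (closure (f k))) ⊆ f (k+1))

variable (hle : IsClosed {p : X × X | p.1 ≤ p.2}) {A Btop : Set X}

lemma chain_coh (k n : ℕ) : chainFun hle A Btop (n+1) (2*k) = chainFun hle A Btop n k := by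
  have h1 : (2*k) % 2 = 0 := by omega
  have h2 : (2*k) / 2 = k := by omega
  simp [chainFun, h1, h2]

lemma chain_top : ∀ n, chainFun hle A Btop n (2^n) = Btop := by
  intro n
  induction n with
  | zero => simp [chainFun]
  | succ n ih =>
      have : 2^(n+1) = 2 * 2^n := by ring
      rw [this, chain_coh, ih]

lemma chain_coh_pow : ∀ m n k, chainFun hle A Btop (n+m) (2^m * k) = chainFun hle A Btop n k := by
  intro m
  induction m with
  | zero => simp
  | succ m ih =>
      intro n k
      have h1 : n + (m+1) = (n+m) + 1 := by omega
      have h2 : 2^(m+1) * k = 2 * (2^m * k) := by ring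
      rw [h1, h2, chain_coh, ih]

variable (hA : IsClosed A) (hAu : IsUpperSet A) (hBo : IsOpen Btop) (hBu : IsUpperSet Btop)
  (hAB : A ⊆ Btop)

include hA hAu hBo hBu hAB

lemma chain_good : ∀ n, GoodChain A n (chainFun hle A Btop n) := by
  intro n
  induction n with
  | zero =>
      have hc1 : chainFun hle A Btop 0 1 = Btop := by simp [chainFun]
      constructor
      · intro k hk1 hk2
        have hk : k = 1 := by omega
        subst hk
        rw [hc1]
        exact ⟨hBo, hBu, hAB⟩
      · intro k hk
        have hk0 : k = 0 := by omega
        subst hk0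
        rw [if_pos rfl, hc1]
        exact hAB
  | succ n ih =>
      obtain ⟨ihInt, ihAdj⟩ := ih
      set f := chainFun hle A Btop n with hf
      -- facts about the anchors
      have hanch : ∀ j, j < 2^n →
          IsClosed (if j = 0 then A else upCl (closure (f j))) ∧
          IsUpperSet (if j = 0 then A else upCl (closure (f j))) ∧
          A ⊆ (if j = 0 then A else upCl (closure (f j))) := by
        intro j hj
        by_cases hj0 : j = 0
        · simp [hj0, hA, hAu]
        · have hjint := ihInt j (by omega) (by omega)
          simp only [hj0, if_false]
          exact ⟨isClosed_upCl_of_isClosed hle isClosed_closure, isUpperSet_upCl _,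
            le_trans (le_trans hjint.2.2 subset_closure) (subset_upCl _)⟩
      have hnext : ∀ j, j < 2^n → IsOpen (f (j+1)) ∧ IsUpperSet (f (j+1)) ∧ A ⊆ f (j+1) :=
        fun j hj => ihInt (j+1) (by omega) (by omega)
      have hspec : ∀ j, j < 2^n →
          IsOpen (pickV hle (if j = 0 then A else upCl (closure (f j))) (f (j+1))) ∧
          IsUpperSet (pickV hle (if j = 0 then A else upCl (closure (f j))) (f (j+1))) ∧
          (if j = 0 then A else upCl (closure (f j))) ⊆
            pickV hle (if j = 0 then A else upCl (closure (f j))) (f (j+1)) ∧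
          upCl (closure (pickV hle (if j = 0 then A else upCl (closure (f j))) (f (j+1)))) ⊆
            f (j+1) := by
        intro j hj
        exact pickV_spec hle (hanch j hj).1 (hanch j hj).2.1 (hnext j hj).1 (hnext j hj).2.1
          (ihAdj j hj)
      have heven : ∀ j, chainFun hle A Btop (n+1) (2*j) = f j := fun j => chain_coh hle j n
      have hodd : ∀ j, chainFun hle A Btop (n+1) (2*j+1) =
          pickV hle (if j = 0 then A else upCl (closure (f j))) (f (j+1)) := by
        intro j
        have h1 : (2*j+1) % 2 = 1 := by omega
        have h2 : (2*j+1) / 2 = j := by omega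
        simp [chainFun, h1, h2, ← hf]
      constructor
      · intro k hk1 hk2
        rcases Nat.even_or_odd k with ⟨j, hj⟩ | ⟨j, hj⟩
        · subst hj
          rw [show j + j = 2*j by ring, heven]
          exact ihInt j (by omega) (by
            have : 2^(n+1) = 2*2^n := by ring
            omega)
        · subst hj
          rw [hodd]
          have hjn : j < 2^n := by
            have : 2^(n+1) = 2*2^n := by ring
            omega
          refine ⟨(hspec j hjn).1, (hspec j hjn).2.1, ?_⟩
          exact le_trans (hanch j hjn).2.2 (hspec j hjn).2.2.1
      · intro k hk
        have h2pow : 2^(n+1) = 2*2^n := by ring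
        rcases Nat.even_or_odd k with ⟨j, hj⟩ | ⟨j, hj⟩
        · subst hj
          rw [show j + j = 2*j by ring]
          have hjn : j < 2^n := by omega
          rw [show 2*j+1 = 2*j+1 from rfl, hodd]
          by_cases hj0 : j = 0
          · subst hj0
            simpa using (hspec 0 hjn).2.2.1
          · have : 2*j ≠ 0 := by omega
            simp only [this, if_false, heven]
            simpa [hj0] using (hspec j hjn).2.2.1
        · subst hj
          have hjn : j < 2^n := by omega
          have hne : 2*j+1 ≠ 0 := by omega
          rw [show 2*j+1+1 = 2*(j+1) by ring, heven]
          simp only [hne, if_false]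
          rw [show 2*j+1 = 2*j+1 from rfl, hodd]
          exact (hspec j hjn).2.2.2

lemma chain_mono : ∀ n k k', 1 ≤ k → k ≤ k' → k' ≤ 2^n →
    chainFun hle A Btop n k ⊆ chainFun hle A Btop n k' := by
  intro n k k' hk1 hkk hk'
  obtain ⟨hInt, hAdj⟩ := chain_good hle hA hAu hBo hBu hAB n
  induction k' with
  | zero => omega
  | succ m ih =>
      rcases Nat.lt_or_ge k (m+1) with h | h
      · have h1 : chainFun hle A Btop n k ⊆ chainFun hle A Btop n m := ih (by omega) (by omega)
        have h2 : chainFun hle A Btop n m ⊆ chainFun hle A Btop n (m+1) := by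
          have hm : m ≠ 0 := by omega
          have := hAdj m (by omega)
          simp only [hm, if_false] at this
          exact le_trans (le_trans subset_closure (subset_upCl _)) this
        exact le_trans h1 h2
      · have : k = m + 1 := by omega
        subst this
        exact le_refl _

lemma chain_cross_sub {n k n' k' : ℕ} (hk1 : 1 ≤ k) (hk2 : k ≤ 2^n) (hk1' : 1 ≤ k')
    (hk2' : k' ≤ 2^n') (hcmp : k * 2^n' ≤ k' * 2^n) :
    chainFun hle A Btop n k ⊆ chainFun hle A Btop n' k' := by
  have e1 : chainFun hle A Btop (n+n') (2^n' * k) = chainFun hle A Btop n k :=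
    chain_coh_pow hle n' n k
  have e2 : chainFun hle A Btop (n+n') (2^n * k') = chainFun hle A Btop n' k' := by
    rw [show n + n' = n' + n by omega]
    exact chain_coh_pow hle n n' k'
  rw [← e1, ← e2]
  apply chain_mono hle hA hAu hBo hBu hAB (n+n')
  · exact Nat.one_le_iff_ne_zero.2 (Nat.mul_ne_zero (by positivity) (by omega))
  · rw [Nat.mul_comm (2^n') k, Nat.mul_comm (2^n) k']
    exact hcmp
  · rw [pow_add]
    exact Nat.mul_le_mul le_rfl hk2'

lemma chain_cross_strict {n k n' k' : ℕ} (hk1 : 1 ≤ k) (hk2 : k ≤ 2^n) (hk1' : 1 ≤ k')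
    (hk2' : k' ≤ 2^n') (hcmp : k * 2^n' < k' * 2^n) :
    upCl (closure (chainFun hle A Btop n k)) ⊆ chainFun hle A Btop n' k' := by
  obtain ⟨hInt, hAdj⟩ := chain_good hle hA hAu hBo hBu hAB (n+n')
  have e1 : chainFun hle A Btop (n+n') (2^n' * k) = chainFun hle A Btop n k :=
    chain_coh_pow hle n' n k
  have e2 : chainFun hle A Btop (n+n') (2^n * k') = chainFun hle A Btop n' k' := by
    rw [show n + n' = n' + n by omega]
    exact chain_coh_pow hle n n' k'
  rw [← e1, ← e2]
  set a := 2^n' * k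
  set b := 2^n * k'
  have hpow : 2^(n+n') = 2^n * 2^n' := by rw [pow_add]
  have ha1 : 1 ≤ a := Nat.one_le_iff_ne_zero.2 (Nat.mul_ne_zero (by positivity) (by omega))
  have hab : a + 1 ≤ b := by
    have hab' : a < b := by
      rw [show a = k * 2^n' from Nat.mul_comm _ _, show b = k' * 2^n from Nat.mul_comm _ _]
      exact hcmp
    omega
  have hb : b ≤ 2^(n+n') := by
    rw [hpow]
    exact Nat.mul_le_mul le_rfl hk2'
  have hstep : upCl (closure (chainFun hle A Btop (n+n') a)) ⊆ chainFun hle A Btop (n+n') (a+1) := by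
    have hane : a ≠ 0 := by omega
    have := hAdj a (by omega)
    simpa [hane] using this
  refine le_trans hstep ?_
  exact chain_mono hle hA hAu hBo hBu hAB (n+n') (a+1) b (by omega) hab hb

end NachbinChain
section NachbinMain

open Filter Topology

lemma dyadic_btwn {a c : ℝ} (ha : 0 ≤ a) (hac : a < c) (hc : c ≤ 1) :
    ∃ n k : ℕ, 1 ≤ k ∧ k + 1 < 2^n ∧ a < (k : ℝ) / 2^n ∧ ((k : ℝ) + 1) / 2^n < c := by
  obtain ⟨n, hn⟩ := pow_unbounded_of_one_lt (3/(c - a)) (one_lt_two (α := ℝ))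
  have hp : (0:ℝ) < 2^n := by positivity
  have hca : (0:ℝ) < c - a := by linarith
  have h3 : 3 / 2^n < c - a := by
    rw [div_lt_iff₀ hp]
    rw [div_lt_iff₀ hca] at hn
    linarith [hn]
  set k : ℕ := (⌊a * 2^n⌋).toNat + 1 with hk
  have hfl0 : (0:ℤ) ≤ ⌊a * 2^n⌋ := Int.floor_nonneg.2 (by positivity)
  have hkr : (k : ℝ) = (⌊a * 2^n⌋ : ℝ) + 1 := by
    have hcast : ((⌊a * 2^n⌋.toNat : ℤ) : ℝ) = ((⌊a * 2^n⌋ : ℤ) : ℝ) := by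
      rw [Int.toNat_of_nonneg hfl0]
    push_cast at hcast
    push_cast [hk]
    linarith
  clear_value k
  have h1 : a < (k:ℝ) / 2^n := by
    rw [lt_div_iff₀ hp, hkr]
    exact Int.lt_floor_add_one _
  have h3' : (3:ℝ) < (c-a) * 2^n := by
    rw [div_lt_iff₀ hp] at h3
    linarith
  have hexp : (c-a) * 2^n = c * 2^n - a * 2^n := by ring
  have h2 : ((k:ℝ) + 1) / 2^n < c := by
    rw [div_lt_iff₀ hp, hkr]
    have := Int.floor_le (a * 2^n)
    linarith
  refine ⟨n, k, by omega, ?_, h1, h2⟩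
  -- k + 1 < 2^n from (k+1)/2^n < c ≤ 1
  have hklt : ((k:ℝ) + 1) < 2^n := by
    rw [div_lt_iff₀ hp] at h2
    have : c * 2^n ≤ 1 * 2^n := mul_le_mul_of_nonneg_right hc hp.le
    linarith
  have : ((k + 1 : ℕ) : ℝ) < ((2^n : ℕ) : ℝ) := by push_cast; linarith
  exact_mod_cast this

variable {X : Type*} [TopologicalSpace X] [CompactSpace X] [PartialOrder X]

/-- Urysohn-Nachbin: separate a point from a closed upper set by a continuous antitone map. -/
lemma nachbin_urysohn (hle : IsClosed {p : X × X | p.1 ≤ p.2}) {A : Set X} (hA : IsClosed A)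
    (hAu : IsUpperSet A) {b : X} (hb : b ∉ A) :
    ∃ ψ : CMap X, (∀ a ∈ A, ψ.toFun a = 0) ∧ ψ.toFun b = 1 := by
  set Btop : Set X := {y : X | y ≤ b}ᶜ with hBtop
  have hBcl : IsClosed {y : X | y ≤ b} := by
    have : {y : X | y ≤ b} = (fun y => (y, b)) ⁻¹' {p : X × X | p.1 ≤ p.2} := rfl
    rw [this]
    exact hle.preimage (continuous_id.prodMk continuous_const)
  have hBo : IsOpen Btop := hBcl.isOpen_compl
  have hBu : IsUpperSet Btop := by
    intro u v huv hu hvB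
    exact hu (le_trans huv hvB)
  have hAB : A ⊆ Btop := fun a ha hab => hb (hAu hab ha)
  set f := chainFun hle A Btop with hf
  have hg : ∀ n, GoodChain A n (f n) := chain_good hle hA hAu hBo hBu hAB
  have hfsubB : ∀ n k, 1 ≤ k → k < 2^n → f n k ⊆ Btop := by
    intro n k h1 h2
    have := chain_mono hle hA hAu hBo hBu hAB n k (2^n) h1 (by omega) (le_refl _)
    rwa [chain_top] at this
  -- the function
  set S : X → Set ℝ := fun x => {q | ∃ n k : ℕ, 1 ≤ k ∧ k < 2^n ∧ q = (k:ℝ) / 2^n ∧ x ∈ f n k}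
    with hS
  set ψr : X → ℝ := fun x => sInf ({1} ∪ S x) with hψr
  have hbdd : ∀ x, BddBelow ({1} ∪ S x) := by
    intro x
    refine ⟨0, ?_⟩
    rintro q (rfl | ⟨n, k, h1, h2, rfl, hx⟩)
    · norm_num
    · positivity
  have hne : ∀ x, ({1} ∪ S x).Nonempty := fun x => ⟨1, Set.mem_union_left _ rfl⟩
  have h0 : ∀ x, 0 ≤ ψr x := by
    intro x
    apply le_csInf (hne x)
    rintro q (rfl | ⟨n, k, h1, h2, rfl, hx⟩)
    · norm_num
    · positivity
  have h1 : ∀ x, ψr x ≤ 1 := fun x => csInf_le (hbdd x) (Set.mem_union_left _ rfl)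
  have hmemle : ∀ x n k, 1 ≤ k → k < 2^n → x ∈ f n k → ψr x ≤ (k:ℝ)/2^n := by
    intro x n k hk1 hk2 hx
    exact csInf_le (hbdd x) (Set.mem_union_right _ ⟨n, k, hk1, hk2, rfl, hx⟩)
  have hanti : ∀ ⦃x y : X⦄, x ≤ y → ψr y ≤ ψr x := by
    intro x y hxy
    apply csInf_le_csInf (hbdd y) (hne x)
    apply Set.union_subset_union_right
    rintro q ⟨n, k, hk1, hk2, rfl, hx⟩
    exact ⟨n, k, hk1, hk2, rfl, ((hg n).1 k hk1 (by omega)).2.1 hxy hx⟩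
  have hA0 : ∀ a ∈ A, ψr a = 0 := by
    intro a ha
    refine le_antisymm ?_ (h0 a)
    by_contra hpos
    push_neg at hpos
    obtain ⟨m, hm⟩ := exists_pow_lt_of_lt_one hpos (by norm_num : (1:ℝ)/2 < 1)
    have hlt2 : 1 < 2^(m+1) := by
      have : 2 ≤ 2^(m+1) := by
        calc 2 = 2^1 := by norm_num
        _ ≤ 2^(m+1) := Nat.pow_le_pow_right (by norm_num) (by omega)
      omega
    have hub := hmemle a (m+1) 1 (le_refl 1) hlt2
      (((hg (m+1)).1 1 (le_refl 1) Nat.one_le_two_pow).2.2 ha)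
    have hmono : (1:ℝ)/2^(m+1) ≤ (1/2)^m := by
      rw [div_pow, one_pow]
      have h2m : (2:ℝ)^m ≤ 2^(m+1) := by
        apply pow_le_pow_right₀ one_le_two (by omega)
      exact div_le_div_of_nonneg_left (by norm_num) (by positivity) h2m
    push_cast at hub
    linarith
  have hb1 : ψr b = 1 := by
    have hSb : S b = ∅ := by
      ext q
      simp only [hS, Set.mem_setOf_eq, Set.mem_empty_iff_false, iff_false]
      rintro ⟨n, k, hk1, hk2, rfl, hbf⟩
      exact (hfsubB n k hk1 hk2 hbf) (le_refl b)
    rw [hψr]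
    simp only [hSb, Set.union_empty]
    exact csInf_singleton 1
  -- continuity
  have hlt : ∀ r : ℝ, IsOpen {x | ψr x < r} := by
    intro r
    rw [isOpen_iff_forall_mem_open]
    intro x hx
    obtain ⟨q, hq, hqr⟩ := exists_lt_of_csInf_lt (hne x) hx
    rcases hq with rfl | ⟨n, k, hk1, hk2, rfl, hxf⟩
    · refine ⟨Set.univ, ?_, isOpen_univ, Set.mem_univ x⟩
      intro y _
      exact lt_of_le_of_lt (h1 y) hqr
    · refine ⟨f n k, ?_, ((hg n).1 k hk1 (by omega)).1, hxf⟩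
      intro y hy
      exact lt_of_le_of_lt (hmemle y n k hk1 hk2 hy) hqr
  have hgt : ∀ r : ℝ, IsOpen {x | r < ψr x} := by
    intro r
    rcases lt_or_ge r 0 with hr | hr
    · have : {x : X | r < ψr x} = Set.univ := by
        ext y; simp only [Set.mem_setOf_eq, Set.mem_univ, iff_true]
        exact lt_of_lt_of_le hr (h0 y)
      rw [this]; exact isOpen_univ
    · rw [isOpen_iff_forall_mem_open]
      intro x hx
      have hx' : r < ψr x := hx
      obtain ⟨n, k, hk1, hk2, hrk, hkx⟩ := dyadic_btwn hr hx' (h1 x)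
      refine ⟨(closure (f n k))ᶜ, ?_, isClosed_closure.isOpen_compl, ?_⟩
      · intro y hy
        show r < ψr y
        by_contra hcon
        push_neg at hcon
        have : ψr y < (k:ℝ)/2^n := lt_of_le_of_lt hcon hrk
        obtain ⟨q, hq, hql⟩ := exists_lt_of_csInf_lt (hne y) this
        rcases hq with rfl | ⟨n', k', hk1', hk2', rfl, hyf⟩
        · have : (k:ℝ)/2^n < 1 := by
            rw [div_lt_one (by positivity)]
            have : ((k:ℕ):ℝ) < ((2^n : ℕ):ℝ) := by exact_mod_cast (by omega : k < 2^n)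
            push_cast at this ⊢
            linarith
          linarith
        · -- cross-level strict inclusion
          have hnat : k' * 2^n < k * 2^n' := by
            have hq' : (k':ℝ)/2^n' < (k:ℝ)/2^n := hql
            rw [div_lt_div_iff₀ (by positivity) (by positivity)] at hq'
            have : ((k' * 2^n : ℕ) : ℝ) < ((k * 2^n' : ℕ) : ℝ) := by push_cast; linarith
            exact_mod_cast this
          have hsub := chain_cross_strict hle hA hAu hBo hBu hAB hk1' (by omega) hk1
            (by omega) hnat
          have : y ∈ f n k := hsub (subset_upCl _ (subset_closure hyf))
          exact hy (subset_closure this)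
      · intro hxc
        have : x ∈ f n (k+1) := by
          have hadj := (hg n).2 k (by omega)
          have hk0 : k ≠ 0 := by omega
          simp only [hk0, if_false] at hadj
          exact hadj (subset_upCl _ hxc)
        have := hmemle x n (k+1) (by omega) (by omega) this
        push_cast at this
        linarith
  have hcont : Continuous ψr := by
    have heq := OrderTopology.topology_eq_generate_intervals (α := ℝ)
    rw [continuous_iff_coinduced_le, heq]
    apply le_generateFrom
    rintro s ⟨r, rfl | rfl⟩
    · exact hgt r
    · exact hlt r
  refine ⟨⟨fun x => ⟨ψr x, h0 x, h1 x⟩, Continuous.subtype_mk hcont _,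
    fun x y hxy => Subtype.mk_le_mk.2 (hanti hxy)⟩, ?_, ?_⟩
  · intro a ha
    exact Subtype.ext (hA0 a ha)
  · exact Subtype.ext hb1

end NachbinMain
section Clamp

variable {X : Type*} [TopologicalSpace X] [Preorder X]

/-- clamp gadget: `0` below `p`, `1` above `q`, linear in between. -/
noncomputable def clampMap (φ : CMap X) (p q : ℝ) (hpq : p < q) : CMap X where
  toFun x := ⟨max 0 (min 1 (((φ.toFun x : ℝ) - p) / (q - p))), le_max_left _ _,
    max_le (by norm_num) (min_le_left _ _)⟩
  continuous' := by
    apply Continuous.subtype_mk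
    apply Continuous.max continuous_const
    apply Continuous.min continuous_const
    exact ((continuous_subtype_val.comp φ.continuous').sub continuous_const).div_const _
  antitone' := by
    intro x y hxy
    apply Subtype.mk_le_mk.2
    apply max_le_max le_rfl
    apply min_le_min le_rfl
    apply div_le_div_of_nonneg_right ?_ (by linarith)
    exact sub_le_sub_right (Subtype.coe_le_coe.2 (φ.antitone' hxy)) p

lemma clampMap_eq_one {φ : CMap X} {p q : ℝ} {hpq : p < q} {x : X}
    (h : q ≤ (φ.toFun x : ℝ)) : (clampMap φ p q hpq).toFun x = 1 := by
  apply Subtype.ext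
  show max 0 (min 1 (((φ.toFun x : ℝ) - p) / (q - p))) = 1
  have h1 : (1:ℝ) ≤ ((φ.toFun x : ℝ) - p) / (q - p) := by
    rw [le_div_iff₀ (by linarith)]
    linarith
  rw [min_eq_left h1, max_eq_right zero_le_one]

lemma clampMap_eq_zero {φ : CMap X} {p q : ℝ} {hpq : p < q} {x : X}
    (h : (φ.toFun x : ℝ) ≤ p) : (clampMap φ p q hpq).toFun x = 0 := by
  apply Subtype.ext
  show max 0 (min 1 (((φ.toFun x : ℝ) - p) / (q - p))) = 0
  have h1 : ((φ.toFun x : ℝ) - p) / (q - p) ≤ 0 :=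
    div_nonpos_of_nonpos_of_nonneg (by linarith) (by linarith)
  rw [max_eq_left (le_trans (min_le_right _ _) h1)]

end Clamp

section ZeroLemma

/-- The key lemma: any `ψ` vanishing on `Zero(Φ)` is `Φ`-null. -/
lemma zero_lemma (T : ContinuousTNorm) {X : Type*} [TopologicalSpace X] [CompactSpace X]
    [PartialOrder X] (Φ : CMap X → I) (hMon : Mon Φ) (hAct : Act T Φ) (hSup : SupC Φ)
    (hTen : TenLax T Φ) (χ : CMap X) (hχ : ∀ x ∈ ZeroPhi Φ, χ.toFun x = 0) : Φ χ = 0 := by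
  set c := Φ χ with hc
  have key : ∀ ε : I, 0 < ε → c ≤ ε := by
    intro ε hε
    set K : Set X := {x | ε ≤ χ.toFun x} with hK
    have hKc : IsClosed K := by
      have hKeq : K = {x | (ε : ℝ) ≤ (χ.toFun x : ℝ)} := by
        ext x
        simp only [hK, Set.mem_setOf_eq]
        exact ⟨fun h => Subtype.coe_le_coe.2 h, fun h => Subtype.coe_le_coe.1 h⟩
      rw [hKeq]
      exact isClosed_le continuous_const (continuous_subtype_val.comp χ.continuous')
    by_cases hK0 : K = ∅
    · -- χ < ε everywhere
      have hpt : ∀ y, χ.toFun y ≤ (CMap.smul T ε CMap.one).toFun y := by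
        intro y
        show χ.toFun y ≤ T.mul ε 1
        rw [T.mul_one']
        have : y ∉ K := by rw [hK0]; exact Set.notMem_empty y
        exact (not_le.1 this).le
      have h2 := hMon _ _ hpt
      rw [hAct] at h2
      exact le_trans h2 (le_trans (T.mono le_rfl unitInterval.le_one') (le_of_eq (T.mul_one' ε)))
    · -- build a null function positive on K
      have hx_null : ∀ x : X, ∃ φ : CMap X, Φ φ = 0 ∧ (x ∈ K → φ.toFun x ≠ 0) := by
        intro x
        by_cases hx : x ∈ K
        · have hxZ : x ∉ ZeroPhi Φ := by
            intro hz
            have h0 := hχ x hz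
            have : ε ≤ χ.toFun x := hx
            rw [h0] at this
            exact hε.not_ge this
          simp only [ZeroPhi, Set.mem_setOf_eq, not_forall] at hxZ
          obtain ⟨ψ, hψ⟩ := hxZ
          exact ⟨ψ, by tauto, fun _ => by tauto⟩
        · refine ⟨CMap.smul T 0 CMap.one, ?_, fun h => absurd h hx⟩
          rw [hAct]; exact T.zero_mul' _
      choose F hF0 hFx using hx_null
      have hKcpt : IsCompact K := hKc.isCompact
      set U : X → Set X := fun x => {y | 0 < ((F x).toFun y : ℝ)} with hU
      have hUopen : ∀ x, IsOpen (U x) :=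
        fun x => isOpen_lt continuous_const (continuous_subtype_val.comp (F x).continuous')
      have hcover : K ⊆ ⋃ x, U x := fun y hy => Set.mem_iUnion.2 ⟨y, Ipos (hFx y hy)⟩
      obtain ⟨t, ht⟩ := hKcpt.elim_finite_subcover U hUopen hcover
      obtain ⟨φ, hφ0, hφb⟩ := exists_null_sup T Φ hAct hSup F hF0 t
      have hφpos : ∀ y ∈ K, 0 < (φ.toFun y : ℝ) := by
        intro y hy
        obtain ⟨x, hxt, hxy⟩ := by simpa using ht hy
        exact lt_of_lt_of_le hxy (Subtype.coe_le_coe.2 (hφb x hxt y))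
      obtain ⟨x₀, hx₀K, hmin⟩ := hKcpt.exists_isMinOn (Set.nonempty_iff_ne_empty.2 hK0)
        (continuous_subtype_val.comp φ.continuous').continuousOn
      set δ : ℝ := (φ.toFun x₀ : ℝ) with hδ
      have hδpos : 0 < δ := hφpos x₀ hx₀K
      have hδ1 : δ ≤ 1 := (φ.toFun x₀).2.2
      have hmin' : ∀ y ∈ K, δ ≤ (φ.toFun y : ℝ) := fun y hy => isMinOn_iff.1 hmin y hy
      set ν : CMap X := clampMap φ (δ/2) δ (by linarith) with hν
      set v : I := Φ ν with hv
      set δ' : I := ⟨δ/2, by constructor <;> linarith⟩ with hδ'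
      have hδ'pos : (0 : I) < δ' := by
        rw [← Subtype.coe_lt_coe]
        show (0:ℝ) < δ/2
        linarith
      -- (b) : δ' ⊗ v = 0
      have hb0 : Φ (CMap.smul T δ' ν) ≤ 0 := by
        rw [← hφ0]
        apply hMon
        intro y
        show T.mul δ' (ν.toFun y) ≤ φ.toFun y
        rcases le_total ((φ.toFun y : ℝ)) (δ/2) with h | h
        · rw [hν, clampMap_eq_zero h, T.mul_zero']
          exact unitInterval.nonneg'
        · exact le_trans (T.mul_le_left δ' _) (Subtype.coe_le_coe.1 h)
      have hbv : T.mul δ' v = 0 := by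
        rw [hv, ← hAct]
        exact le_antisymm hb0 unitInterval.nonneg'
      -- (c) : c ≤ ε ∨ c ⊗ v
      have hpt : ∀ y, χ.toFun y ≤ ((CMap.smul T ε CMap.one).sup (CMap.tens T χ ν)).toFun y := by
        intro y
        show χ.toFun y ≤ max (T.mul ε ((CMap.one : CMap X).toFun y)) (T.mul (χ.toFun y) (ν.toFun y))
        by_cases hy : y ∈ K
        · have h1 : ν.toFun y = 1 := by
            rw [hν]
            exact clampMap_eq_one (hmin' y hy)
          rw [h1, T.mul_one']
          exact le_max_right _ _
        · have h2 : χ.toFun y ≤ ε := (not_le.1 hy).le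
          refine le_trans h2 (le_trans ?_ (le_max_left _ _))
          show ε ≤ T.mul ε 1
          rw [T.mul_one']
      have hc1 : c ≤ max (T.mul ε (Φ CMap.one)) (Φ (CMap.tens T χ ν)) := by
        have h3 := hMon _ _ hpt
        rwa [hSup, hAct] at h3
      have hc2 : c ≤ max ε (T.mul c v) := by
        refine le_trans hc1 (max_le_max ?_ ?_)
        · exact le_trans (T.mono le_rfl unitInterval.le_one') (le_of_eq (T.mul_one' ε))
        · exact hTen χ ν
      rcases le_max_iff.1 hc2 with h | h
      · exact h
      · have hcv : T.mul c v = c := le_antisymm (T.mul_le_left c v) h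
        rw [T.eq_zero_of_mul_fix hbv hδ'pos hcv]
        exact unitInterval.nonneg'
  by_contra hc0
  have hcpos : 0 < (c : ℝ) := Ipos hc0
  have hcle : (c : ℝ) ≤ 1 := c.2.2
  set ε : I := ⟨(c : ℝ)/2, by constructor <;> linarith⟩ with hε
  have hεpos : (0:I) < ε := by
    rw [← Subtype.coe_lt_coe]
    show (0:ℝ) < (c:ℝ)/2
    linarith
  have := key ε hεpos
  rw [← Subtype.coe_le_coe] at this
  have : (c:ℝ) ≤ (c:ℝ)/2 := this
  linarith

end ZeroLemma
section MainAssembly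

open Filter Topology

lemma irreducible_part (T : ContinuousTNorm) {X : Type*} [TopologicalSpace X] [CompactSpace X]
    [PartialOrder X] (hle : IsClosed {p : X × X | p.1 ≤ p.2})
    (Φ : CMap X → I) (hMon : Mon Φ) (hAct : Act T Φ) (hSup : SupC Φ) (hTen : TenLax T Φ)
    (hTenC : TenC T Φ) (A₁ A₂ : Set X) (hA₁c : IsClosed A₁) (hA₁u : IsUpperSet A₁)
    (hA₂c : IsClosed A₂) (hA₂u : IsUpperSet A₂) (hunion : A₁ ∪ A₂ = ZeroPhi Φ) :
    ZeroPhi Φ = A₁ ∨ ZeroPhi Φ = A₂ := by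
  by_contra hcon
  push_neg at hcon
  obtain ⟨hne1, hne2⟩ := hcon
  have hA₁Z : A₁ ⊆ ZeroPhi Φ := by rw [← hunion]; exact Set.subset_union_left
  have hA₂Z : A₂ ⊆ ZeroPhi Φ := by rw [← hunion]; exact Set.subset_union_right
  have hx1 : ∃ x ∈ ZeroPhi Φ, x ∉ A₁ := by
    by_contra h
    push_neg at h
    exact hne1 (Set.Subset.antisymm (fun x hx => h x hx) hA₁Z)
  have hx2 : ∃ x ∈ ZeroPhi Φ, x ∉ A₂ := by
    by_contra h
    push_neg at h
    exact hne2 (Set.Subset.antisymm (fun x hx => h x hx) hA₂Z)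
  obtain ⟨x₁, hx₁Z, hx₁A⟩ := hx1
  obtain ⟨x₂, hx₂Z, hx₂A⟩ := hx2
  obtain ⟨ψ₁, hψ₁0, hψ₁1⟩ := nachbin_urysohn hle hA₁c hA₁u hx₁A
  obtain ⟨ψ₂, hψ₂0, hψ₂1⟩ := nachbin_urysohn hle hA₂c hA₂u hx₂A
  have hpq : ∀ n : ℕ, (1:ℝ)/2^(n+1) < (1:ℝ)/2^n := by
    intro n
    apply div_lt_div_of_pos_left one_pos (by positivity)
    exact pow_lt_pow_right₀ one_lt_two (by omega)
  set α : ℕ → CMap X := fun n => clampMap ψ₁ ((1:ℝ)/2^(n+1)) ((1:ℝ)/2^n) (hpq n) with hα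
  set β : ℕ → CMap X := fun n => clampMap ψ₂ ((1:ℝ)/2^(n+1)) ((1:ℝ)/2^n) (hpq n) with hβ
  set a : ℕ → I := fun n => Φ (α n) with ha
  set b : ℕ → I := fun n => Φ (β n) with hb
  -- the products vanish on Zero(Φ), hence are Φ-null
  have hprod0 : ∀ n m, T.mul (a n) (b m) = 0 := by
    intro n m
    rw [ha, hb]
    simp only
    rw [← hTenC]
    apply zero_lemma T Φ hMon hAct hSup hTen
    intro x hxZ
    show T.mul ((α n).toFun x) ((β m).toFun x) = 0
    rcases (by rw [hunion]; exact hxZ : x ∈ A₁ ∪ A₂) with hx | hx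
    · have h0 : (α n).toFun x = 0 := by
        rw [hα]
        apply clampMap_eq_zero
        rw [hψ₁0 x hx]
        show (0:ℝ) ≤ _
        positivity
      rw [h0, T.zero_mul']
    · have h0 : (β m).toFun x = 0 := by
        rw [hβ]
        apply clampMap_eq_zero
        rw [hψ₂0 x hx]
        show (0:ℝ) ≤ _
        positivity
      rw [h0, T.mul_zero']
  -- positivity of a n, b n
  have hα1 : ∀ n, (α n).toFun x₁ = 1 := by
    intro n
    rw [hα]
    apply clampMap_eq_one
    rw [hψ₁1]
    show (1:ℝ)/2^n ≤ 1
    rw [div_le_one (by positivity)]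
    exact one_le_pow₀ one_le_two
  have hβ1 : ∀ n, (β n).toFun x₂ = 1 := by
    intro n
    rw [hβ]
    apply clampMap_eq_one
    rw [hψ₂1]
    show (1:ℝ)/2^n ≤ 1
    rw [div_le_one (by positivity)]
    exact one_le_pow₀ one_le_two
  have hapos : ∀ n, a n ≠ 0 := by
    intro n h
    have h1 := hx₁Z (α n) h
    rw [hα1 n] at h1
    have := congrArg Subtype.val h1
    norm_num at this
  have hbpos : ∀ n, b n ≠ 0 := by
    intro n h
    have h1 := hx₂Z (β n) h
    rw [hβ1 n] at h1
    have := congrArg Subtype.val h1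
    norm_num at this
  -- pointwise monotonicity and square-domination
  have hptmono : ∀ (ψ : CMap X) (n : ℕ) (y : X),
      (clampMap ψ ((1:ℝ)/2^(n+1)) ((1:ℝ)/2^n) (hpq n)).toFun y ≤
      (clampMap ψ ((1:ℝ)/2^(n+2)) ((1:ℝ)/2^(n+1)) (hpq (n+1))).toFun y := by
    intro ψ n y
    rcases le_total ((ψ.toFun y : ℝ)) ((1:ℝ)/2^(n+1)) with h | h
    · rw [clampMap_eq_zero h]
      exact unitInterval.nonneg'
    · rw [clampMap_eq_one h]
      exact unitInterval.le_one'
  have hptsq : ∀ (ψ : CMap X) (n : ℕ) (y : X),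
      (clampMap ψ ((1:ℝ)/2^(n+1)) ((1:ℝ)/2^n) (hpq n)).toFun y ≤
      T.mul ((clampMap ψ ((1:ℝ)/2^(n+2)) ((1:ℝ)/2^(n+1)) (hpq (n+1))).toFun y)
            ((clampMap ψ ((1:ℝ)/2^(n+2)) ((1:ℝ)/2^(n+1)) (hpq (n+1))).toFun y) := by
    intro ψ n y
    rcases le_total ((ψ.toFun y : ℝ)) ((1:ℝ)/2^(n+1)) with h | h
    · rw [clampMap_eq_zero h]
      exact unitInterval.nonneg'
    · rw [clampMap_eq_one h, T.mul_one']
      exact unitInterval.le_one'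
  have hamono : ∀ n, a n ≤ a (n+1) := fun n => hMon _ _ (hptmono ψ₁ n)
  have hbmono : ∀ n, b n ≤ b (n+1) := fun n => hMon _ _ (hptmono ψ₂ n)
  have hasq : ∀ n, a n ≤ T.mul (a (n+1)) (a (n+1)) := by
    intro n
    rw [ha]
    simp only
    rw [← hTenC]
    exact hMon _ _ (hptsq ψ₁ n)
  have hbsq : ∀ n, b n ≤ T.mul (b (n+1)) (b (n+1)) := by
    intro n
    rw [hb]
    simp only
    rw [← hTenC]
    exact hMon _ _ (hptsq ψ₂ n)
  -- limits
  have limit_pack : ∀ (s : ℕ → I), (∀ n, s n ≤ s (n+1)) →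
      ∃ sstar : I, Tendsto s atTop (𝓝 sstar) ∧ (∀ n, s n ≤ sstar) := by
    intro s hmono
    set sr : ℕ → ℝ := fun n => ((s n : I) : ℝ) with hsr
    have hmr : Monotone sr := monotone_nat_of_le_succ (fun n => Subtype.coe_le_coe.2 (hmono n))
    have hbdd : BddAbove (Set.range sr) := ⟨1, by rintro x ⟨n, rfl⟩; exact (s n).2.2⟩
    have hT : Tendsto sr atTop (𝓝 (⨆ n, sr n)) := tendsto_atTop_ciSup hmr hbdd
    have h0 : 0 ≤ ⨆ n, sr n := le_trans (s 0).2.1 (le_ciSup hbdd 0)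
    have h1 : (⨆ n, sr n) ≤ 1 := ciSup_le (fun n => (s n).2.2)
    refine ⟨⟨⨆ n, sr n, h0, h1⟩, tendsto_subtype_rng.2 hT, ?_⟩
    intro n
    exact Subtype.coe_le_coe.1 (le_ciSup hbdd n)
  obtain ⟨astar, hta, hale⟩ := limit_pack a hamono
  obtain ⟨bstar, htb, hble⟩ := limit_pack b hbmono
  -- astar ⊗ bstar = 0
  have hab0 : T.mul astar bstar = 0 := by
    have h1 : Tendsto (fun n => T.mul (a n) (b n)) atTop (𝓝 (T.mul astar bstar)) :=
      (T.continuous.tendsto (astar, bstar)).comp (hta.prodMk_nhds htb)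
    have h2 : Tendsto (fun n => T.mul (a n) (b n)) atTop (𝓝 (0 : I)) := by
      simp only [hprod0]
      exact tendsto_const_nhds
    exact tendsto_nhds_unique h1 h2
  -- idempotency
  have idem_pack : ∀ (s : ℕ → I) (sstar : I), Tendsto s atTop (𝓝 sstar) →
      (∀ n, s n ≤ T.mul (s (n+1)) (s (n+1))) → T.mul sstar sstar = sstar := by
    intro s sstar hts hsq
    refine le_antisymm (T.mul_le_left _ _) ?_
    have hshift : Tendsto (fun n => s (n+1)) atTop (𝓝 sstar) :=
      hts.comp (tendsto_add_atTop_nat 1)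
    have h1 : Tendsto (fun n => T.mul (s (n+1)) (s (n+1))) atTop (𝓝 (T.mul sstar sstar)) :=
      (T.continuous.tendsto (sstar, sstar)).comp (hshift.prodMk_nhds hshift)
    have h2 : Tendsto (fun n => ((s n : I) : ℝ)) atTop (𝓝 ((sstar : I) : ℝ)) :=
      tendsto_subtype_rng.1 hts
    have h3 : Tendsto (fun n => ((T.mul (s (n+1)) (s (n+1)) : I) : ℝ)) atTop
        (𝓝 ((T.mul sstar sstar : I) : ℝ)) := tendsto_subtype_rng.1 h1
    have h4 : ((sstar : I) : ℝ) ≤ ((T.mul sstar sstar : I) : ℝ) :=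
      le_of_tendsto_of_tendsto' h2 h3 (fun n => Subtype.coe_le_coe.2 (hsq n))
    exact Subtype.coe_le_coe.1 h4
  have haidem : T.mul astar astar = astar := idem_pack a astar hta hasq
  have hbidem : T.mul bstar bstar = bstar := idem_pack b bstar htb hbsq
  -- positivity of astar, bstar
  have hasne : astar ≠ 0 := by
    intro h
    have := hale 0
    rw [h] at this
    exact hapos 0 (le_antisymm this unitInterval.nonneg')
  have hbsne : bstar ≠ 0 := by
    intro h
    have := hble 0
    rw [h] at this
    exact hbpos 0 (le_antisymm this unitInterval.nonneg')
  -- final contradiction via divisibility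
  rcases le_total astar bstar with hab | hab
  · obtain ⟨s, hs⟩ := T.exists_mul_eq bstar astar hab
    have : astar = 0 := by
      calc astar = T.mul bstar s := hs.symm
      _ = T.mul (T.mul bstar bstar) s := by rw [hbidem]
      _ = T.mul bstar (T.mul bstar s) := by rw [T.assoc]
      _ = T.mul bstar astar := by rw [hs]
      _ = T.mul astar bstar := by rw [T.comm]
      _ = 0 := hab0
    exact hasne this
  · obtain ⟨s, hs⟩ := T.exists_mul_eq astar bstar hab
    have : bstar = 0 := by
      calc bstar = T.mul astar s := hs.symm
      _ = T.mul (T.mul astar astar) s := by rw [haidem]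
      _ = T.mul astar (T.mul astar s) := by rw [T.assoc]
      _ = T.mul astar bstar := by rw [hs]
      _ = 0 := hab0
    exact hbsne this

end MainAssembly
/-- If `Φ` satisfies `(Mon)`, `(Act)`, `(Sup)` and `(Ten)lax`, then `(Top)` forces
`Zero(Φ)` to be nonempty, and `(Ten)` forces `Zero(Φ)` to be irreducible. -/
theorem zeroPhi_nonempty_and_irreducible (T : ContinuousTNorm) {X : Type*} [TopologicalSpace X] [CompactSpace X]
    [PartialOrder X] (hle : IsClosed {p : X × X | p.1 ≤ p.2})
    (Φ : CMap X → I) (hMon : Mon Φ) (hAct : Act T Φ) (hSup : SupC Φ) (hTen : TenLax T Φ) :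
    (TopC Φ → (ZeroPhi Φ).Nonempty) ∧
    (TenC T Φ → ∀ A₁ A₂ : Set X, IsClosed A₁ → IsUpperSet A₁ → IsClosed A₂ →
      IsUpperSet A₂ → A₁ ∪ A₂ = ZeroPhi Φ → ZeroPhi Φ = A₁ ∨ ZeroPhi Φ = A₂) := by
  constructor
  · exact fun hTop => part1 T Φ hMon hAct hSup hTop
  · intro hTenC A₁ A₂ hA₁c hA₁u hA₂c hA₂u hunion
    exact irreducible_part T hle Φ hMon hAct hSup hTen hTenC A₁ A₂ hA₁c hA₁u hA₂c hA₂u hunion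
end

section
/- Let ⊗ = * be multiplication on [0,1], X a partially ordered compact space, and L ⊆ CX a subset closed under u-powers and under truncated subtraction −⊖u for all u ∈ [0,1]. Assume the cone L is initial, i.e. for all x, y ∈ X, x ≥ y if and only if ψ(x) ≤ ψ(y) for all ψ ∈ L. Then L satisfies the separation condition (Sep). -/
open unitInterval Set

/-- The residuation `hom(u,v)` of multiplication on `[0,1]`:
`min (v/u) 1` for `u ≠ 0`, and `1` for `u = 0`. -/
noncomputable def phom (u v : I) : I :=
  if h : (u : ℝ) = 0 then 1
  else ⟨min ((v : ℝ) / (u : ℝ)) 1,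
    ⟨le_min (div_nonneg v.2.1 u.2.1) zero_le_one, min_le_right _ _⟩⟩

namespace CMap

variable {X : Type*} [TopologicalSpace X] [Preorder X]

/-- The `u`-power `(ψ ⋔ u)(x) = hom(u, ψ(x))` for the multiplication t-norm. -/
noncomputable def ppow (ψ : CMap X) (u : I) : CMap X where
  toFun x := phom u (ψ.toFun x)
  continuous' := by
    unfold phom
    split_ifs with h
    · exact continuous_const
    · exact Continuous.subtype_mk
        (((continuous_subtype_val.comp ψ.continuous').div_const _).min continuous_const) _
  antitone' := fun a b h => by
    unfold phom
    split_ifs with h0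
    · exact le_rfl
    · have hu : (0 : ℝ) < (u : ℝ) := lt_of_le_of_ne u.2.1 (Ne.symm h0)
      have hab := Subtype.coe_le_coe.2 (ψ.antitone' h)
      exact Subtype.mk_le_mk.mpr (min_le_min (by gcongr) le_rfl)

end CMap

/-- The separation condition `(Sep)` for a subset `L ⊆ CX`. -/
def SepCond {X : Type*} [TopologicalSpace X] [Preorder X] (L : Set (CMap X)) : Prop :=
  ∀ x y : X, ¬ y ≤ x → ∃ ψ' ∈ L, ∃ U : Set X, IsOpen U ∧ y ∈ U ∧
    ψ'.toFun x = 1 ∧ ∀ z ∈ U, ψ'.toFun z = 0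

/-- For the multiplication t-norm: if `L ⊆ CX` is closed under `u`-powers and under
truncated subtraction `- ⊖ u`, and is an initial cone, then `L` satisfies `(Sep)`. -/
theorem multiplication_initial_implies_sep {X : Type*} [TopologicalSpace X] [CompactSpace X]
    [PartialOrder X] (hle : IsClosed {p : X × X | p.1 ≤ p.2})
    (L : Set (CMap X))
    (hpow : ∀ u : I, ∀ ψ ∈ L, CMap.ppow ψ u ∈ L)
    (hsub : ∀ u : I, ∀ ψ ∈ L, CMap.tsub ψ u ∈ L)
    (hinit : ∀ x y : X, y ≤ x ↔ ∀ ψ ∈ L, ψ.toFun x ≤ ψ.toFun y) :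
    SepCond L := by
  intro x y hxy
  obtain ⟨ψ, hψL, hlt⟩ : ∃ ψ ∈ L, ¬ ψ.toFun x ≤ ψ.toFun y := by
    by_contra h
    push_neg at h
    exact hxy ((hinit x y).mpr h)
  set a := ψ.toFun x with ha
  set b := ψ.toFun y with hb
  have hba : (b : ℝ) < a := not_le.mp (fun h => hlt (Subtype.coe_le_coe.mp h))
  have ha0 : (a : ℝ) ≠ 0 := ne_of_gt (lt_of_le_of_lt b.2.1 hba)
  have hapos : (0 : ℝ) < a := lt_of_le_of_lt b.2.1 hba
  -- first power
  set ψ₂ := CMap.ppow ψ a with hψ₂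
  have h2x : ((ψ₂.toFun x : ℝ)) = 1 := by
    show ((phom a (ψ.toFun x) : ℝ)) = 1
    unfold phom
    rw [dif_neg ha0]
    simp [← ha, div_self ha0]
  set c2 : ℝ := (ψ₂.toFun y : ℝ) with hc2
  have hc2nn : 0 ≤ c2 := (ψ₂.toFun y).2.1
  have hc2lt : c2 < 1 := by
    have heq : c2 = min ((b : ℝ) / a) 1 := by
      show ((phom a (ψ.toFun y) : ℝ)) = _
      unfold phom
      rw [dif_neg ha0]
    rw [heq]
    exact lt_of_le_of_lt (min_le_left _ _) ((div_lt_one hapos).mpr hba)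
  set m : ℝ := (1 + c2) / 2 with hm
  have hm0 : 0 ≤ m := by positivity
  have hm1 : m < 1 := by rw [hm]; linarith only [hc2lt]
  have hc2m : c2 < m := by rw [hm]; linarith only [hc2lt]
  set mI : I := ⟨m, hm0, le_of_lt hm1⟩ with hmI
  set uI : I := ⟨1 - m, by constructor <;> linarith only [hm0, hm1]⟩ with huI
  have hu0 : ((uI : ℝ)) ≠ 0 := by
    rw [huI]
    show (1 : ℝ) - m ≠ 0
    linarith only [hm1]
  set ψ₃ := CMap.tsub ψ₂ mI with hψ₃
  refine ⟨CMap.ppow ψ₃ uI, hpow uI _ (hsub mI _ (hpow a ψ hψL)),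
    {z | ((ψ₂.toFun z : ℝ)) < m}, ?_, hc2m, ?_, ?_⟩
  · exact isOpen_lt (continuous_subtype_val.comp ψ₂.continuous') continuous_const
  · apply Subtype.ext
    have h3x : ((ψ₃.toFun x : ℝ)) = 1 - m := by
      show max ((ψ₂.toFun x : ℝ) - m) 0 = 1 - m
      rw [h2x]
      exact max_eq_left (by linarith only [hm1])
    show ((phom uI (ψ₃.toFun x) : ℝ)) = 1
    unfold phom
    rw [dif_neg hu0]
    show min ((ψ₃.toFun x : ℝ) / (1 - m)) 1 = 1
    rw [h3x, div_self hu0]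
    simp
  · intro z hz
    have hzlt : ((ψ₂.toFun z : ℝ)) < m := hz
    have h3z : ((ψ₃.toFun z : ℝ)) = 0 := by
      show max ((ψ₂.toFun z : ℝ) - m) 0 = 0
      exact max_eq_right (by linarith only [hzlt])
    apply Subtype.ext
    show ((phom uI (ψ₃.toFun z) : ℝ)) = 0
    unfold phom
    rw [dif_neg hu0]
    show min ((ψ₃.toFun z : ℝ) / (1 - m)) 1 = 0
    rw [h3z, zero_div]
    simp
end
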